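/- For every real k with 2 < k < 4 and every x > 0, sin(k · arctan(1/x)) < k·x/(1+x²). -/

import Mathlib

open Real

theorem stmt_0 (k x : ℝ) (hk2 : 2 < k) (hk4 : k < 4) (hx : 0 < x) :
    Real.sin (k * Real.arctan (1 / x)) < k * x / (1 + x ^ 2) := by
  set θ := Real.arctan (1 / x) with hθ
  have hθpos : 0 < θ := by
    have := Real.arctan_strictMono (show (0:ℝ) < 1 / x by positivity)
    rwa [Real.arctan_zero] at this
  have hθlt : θ < π / 2 := Real.arctan_lt_pi_div_two _
  have h1 : (0:ℝ) < 1 + (1/x)^2 := by positivity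
  have key : Real.sin θ * Real.cos θ = x / (1 + x ^ 2) := by
    rw [hθ, Real.sin_arctan, Real.cos_arctan]
    have hs : Real.sqrt (1 + (1/x)^2) * Real.sqrt (1 + (1/x)^2) = 1 + (1/x)^2 :=
      Real.mul_self_sqrt h1.le
    have hs0 : Real.sqrt (1 + (1/x)^2) ≠ 0 := by positivity
    rw [div_mul_div_comm, hs]
    rw [div_eq_div_iff (by positivity) (by positivity)]
    field_simp
    ring
  have hrhs : k * x / (1 + x ^ 2) = (k / 2) * Real.sin (2 * θ) := by
    rw [Real.sin_two_mul, mul_assoc, key]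
    field_simp
  rw [hrhs]
  have hsin2 : 0 < Real.sin (2 * θ) :=
    Real.sin_pos_of_pos_of_lt_pi (by linarith) (by linarith)
  by_cases hcase : k * θ ≤ π
  · have hmem0 : (0:ℝ) ∈ Set.Icc (0:ℝ) π := ⟨le_refl 0, Real.pi_pos.le⟩
    have hmemk : k * θ ∈ Set.Icc (0:ℝ) π := ⟨by positivity, hcase⟩
    have hne : (0:ℝ) ≠ k * θ := by positivity
    have ha : (0:ℝ) < 1 - 2 / k := by
      rw [sub_pos, div_lt_one (by linarith)]; exact hk2
    have hb : (0:ℝ) < 2 / k := by positivity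
    have hab : (1 - 2 / k) + 2 / k = 1 := by ring
    have hcc := strictConcaveOn_sin_Icc.2 hmem0 hmemk hne ha hb hab
    have hpt : (1 - 2 / k) • (0:ℝ) + (2 / k) • (k * θ) = 2 * θ := by
      have hk0 : k ≠ 0 := by linarith
      field_simp
      rw [smul_eq_mul, smul_eq_mul, mul_zero, zero_add, ← mul_assoc, div_mul_cancel₀ 2 hk0]
    rw [hpt, Real.sin_zero] at hcc
    have h2 : (2 / k) * Real.sin (k * θ) < Real.sin (2 * θ) := by
      simpa using hcc
    have hk0 : (0:ℝ) < k / 2 := by linarith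
    calc Real.sin (k * θ) = (k / 2) * ((2 / k) * Real.sin (k * θ)) := by
          field_simp
      _ < (k / 2) * Real.sin (2 * θ) := by
          exact mul_lt_mul_of_pos_left h2 hk0
  · push_neg at hcase
    have h2pi : k * θ < 2 * π := by nlinarith [Real.pi_pos]
    have hsk : Real.sin (k * θ) ≤ 0 := by
      rw [← Real.sin_sub_two_pi]
      exact Real.sin_nonpos_of_nonpos_of_neg_pi_le (by linarith) (by linarith)
    have : 0 < (k / 2) * Real.sin (2 * θ) := by positivity
    linarith
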